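/- Let p > 0 with p ≠ 1, let d > 1, let -1 < z₀ < 1, and define v(s) = ((1+s)/2)^p - ((1+z₀)/(1-z₀))^p ((1-s)/2)^p on (-1,1). Then for all s ∈ (-1,1): (1-s²) v''(s) - 2(d-1) s v'(s) + p(d-1) v(s) = ((p+d-2)(1-s²)/(p-1)) v''(s). -/

import Mathlib

open Set Filter Topology

/-- Generic derivative lemma used twice. -/
lemma stmt12_aux (c q : ℝ) (t : ℝ) (ht : t ∈ Set.Ioo (-1 : ℝ) 1) :
    HasDerivAt (fun t : ℝ => ((1 + t) / 2) ^ q - c * ((1 - t) / 2) ^ q)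
      (q / 2 * ((1 + t) / 2) ^ (q - 1) + c * (q / 2) * ((1 - t) / 2) ^ (q - 1)) t := by
  have hx : (0:ℝ) < (1 + t) / 2 := by linarith [ht.1]
  have hy : (0:ℝ) < (1 - t) / 2 := by linarith [ht.2]
  have h1 : HasDerivAt (fun t : ℝ => (1 + t) / 2) (1 / 2) t := by
    simpa using ((hasDerivAt_id t).const_add 1).div_const 2
  have h2 : HasDerivAt (fun t : ℝ => (1 - t) / 2) (-1 / 2) t := by
    simpa using ((hasDerivAt_id t).const_sub 1).div_const 2
  have h1' := h1.rpow_const (p := q) (Or.inl hx.ne')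
  have h2' := (h2.rpow_const (p := q) (Or.inl hy.ne')).const_mul c
  have := h1'.sub h2'
  convert this using 1
  all_goals first | rfl | ring

/-- applying the ODE operator to
`v(s) = ((1+s)/2)^p - ((1+z₀)/(1-z₀))^p ((1-s)/2)^p`. -/
theorem stmt12 (p d z₀ : ℝ) (hp : 0 < p) (hp1 : p ≠ 1) (hd : 1 < d)
    (hz₀ : z₀ ∈ Set.Ioo (-1 : ℝ) 1) :
    ∀ s ∈ Set.Ioo (-1 : ℝ) 1,
      (1 - s ^ 2) *
          iteratedDeriv 2
            (fun t : ℝ => ((1 + t) / 2) ^ p - ((1 + z₀) / (1 - z₀)) ^ p * ((1 - t) / 2) ^ p) s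
        - 2 * (d - 1) * s *
            deriv
              (fun t : ℝ => ((1 + t) / 2) ^ p - ((1 + z₀) / (1 - z₀)) ^ p * ((1 - t) / 2) ^ p) s
        + p * (d - 1) *
            (((1 + s) / 2) ^ p - ((1 + z₀) / (1 - z₀)) ^ p * ((1 - s) / 2) ^ p)
      = (p + d - 2) * (1 - s ^ 2) / (p - 1) *
          iteratedDeriv 2
            (fun t : ℝ => ((1 + t) / 2) ^ p - ((1 + z₀) / (1 - z₀)) ^ p * ((1 - t) / 2) ^ p) s := by
  intro s hs
  set C := ((1 + z₀) / (1 - z₀)) ^ p with hC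
  have hx : (0:ℝ) < (1 + s) / 2 := by linarith [hs.1]
  have hy : (0:ℝ) < (1 - s) / 2 := by linarith [hs.2]
  set x := (1 + s) / 2 with hxdef
  set y := (1 - s) / 2 with hydef
  -- first derivative
  have hd1 : deriv (fun t : ℝ => ((1 + t) / 2) ^ p - C * ((1 - t) / 2) ^ p) s
      = p / 2 * x ^ (p - 1) + C * (p / 2) * y ^ (p - 1) :=
    (stmt12_aux C p s hs).deriv
  -- the first derivative function, on a neighborhood
  have hev : deriv (fun t : ℝ => ((1 + t) / 2) ^ p - C * ((1 - t) / 2) ^ p)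
      =ᶠ[𝓝 s] fun t : ℝ => p / 2 * (((1 + t) / 2) ^ (p - 1) - (-C) * ((1 - t) / 2) ^ (p - 1)) := by
    filter_upwards [isOpen_Ioo.mem_nhds hs] with t ht
    rw [(stmt12_aux C p t ht).deriv]
    ring
  -- second derivative
  have hd2 : iteratedDeriv 2 (fun t : ℝ => ((1 + t) / 2) ^ p - C * ((1 - t) / 2) ^ p) s
      = p / 2 * ((p - 1) / 2 * x ^ (p - 1 - 1) + (-C) * ((p - 1) / 2) * y ^ (p - 1 - 1)) := by
    rw [iteratedDeriv_succ, iteratedDeriv_one, hev.deriv_eq]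
    exact (((stmt12_aux (-C) (p - 1) s hs)).const_mul (p / 2)).deriv
  rw [hd1, hd2]
  -- rpow splitting
  have hxs : x ^ (p - 1) = x ^ (p - 1 - 1) * x := by
    rw [← Real.rpow_add_one hx.ne']; ring_nf
  have hxp : x ^ p = x ^ (p - 1 - 1) * x * x := by
    rw [← hxs, ← Real.rpow_add_one hx.ne']; ring_nf
  have hys : y ^ (p - 1) = y ^ (p - 1 - 1) * y := by
    rw [← Real.rpow_add_one hy.ne']; ring_nf
  have hyp : y ^ p = y ^ (p - 1 - 1) * y * y := by
    rw [← hys, ← Real.rpow_add_one hy.ne']; ring_nf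
  rw [hxs, hxp, hys, hyp]
  have hp1' : p - 1 ≠ 0 := sub_ne_zero.mpr hp1
  have hxy : x = (1 + s) / 2 := hxdef
  have hyy : y = (1 - s) / 2 := hydef
  field_simp
  rw [hxy, hyy]
  ring
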